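/- Let C_n be the cycle graph, and let d, r be positive integer vectors such that (diag(d) - A(C_n)) r = a·(1,...,1) for some positive integer a dividing r_1 + ... + r_n. Setting g = gcd(a, r_1, ..., r_n), the pair (d̃, r̃) with d̃ = ((r_1+...+r_n)/a, d_1, ..., d_n) and r̃ = (a/g, r_1/g, ..., r_n/g) is an arithmetical structure on the wheel graph W_n. -/
import Mathlib


/-- Predecessor of cycle vertex `i` in the cycle `v_1, …, v_n`. -/
def cyclePrev (n i : ℕ) : ℕ := if i = 1 then n else i - 1

/-- Successor of cycle vertex `i` in the cycle `v_1, …, v_n`. -/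
def cycleNext (n i : ℕ) : ℕ := if i = n then 1 else i + 1

/-- `(d, r)` is an arithmetical structure on the wheel graph `W_n`, whose hub `v_0`
is indexed by `0` and whose cycle vertices `v_1, …, v_n` are indexed by `1, …, n`. -/
def IsWheelArithStructure (n : ℕ) (d r : ℕ → ℕ) : Prop :=
  (∀ i ≤ n, 0 < d i) ∧ (∀ i ≤ n, 0 < r i) ∧
  (Finset.range (n + 1)).gcd r = 1 ∧
  d 0 * r 0 = ∑ i ∈ Finset.Icc 1 n, r i ∧
  ∀ i, 1 ≤ i → i ≤ n → d i * r i = r 0 + r (cyclePrev n i) + r (cycleNext n i)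

/-- If `(diag d - A(C_n)) r = a·𝟏` with `a ∣ r 1 + ⋯ + r n` and `g = gcd(a, r 1, …, r n)`,
then `((∑ r)/a, d 1, …, d n)` together with `(a/g, r 1/g, …, r n/g)` is an arithmetical
structure on the wheel graph `W_n`. -/
theorem wheel_structure_from_cycle_constant (n : ℕ) (hn : 3 ≤ n) (d r : ℕ → ℕ) (a : ℕ)
    (ha : 0 < a)
    (hd : ∀ i, 1 ≤ i → i ≤ n → 0 < d i) (hr : ∀ i, 1 ≤ i → i ≤ n → 0 < r i)
    (heq : ∀ i, 1 ≤ i → i ≤ n →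
      d i * r i = r (cyclePrev n i) + r (cycleNext n i) + a)
    (hdvd : a ∣ ∑ i ∈ Finset.Icc 1 n, r i) :
    IsWheelArithStructure n
      (fun i => if i = 0 then (∑ j ∈ Finset.Icc 1 n, r j) / a else d i)
      (fun i => if i = 0 then a / Nat.gcd a ((Finset.Icc 1 n).gcd r)
        else r i / Nat.gcd a ((Finset.Icc 1 n).gcd r)) := by

  set g0 := (Finset.Icc 1 n).gcd r with hg0
  set g := Nat.gcd a g0 with hg
  have hgpos : 0 < g := Nat.gcd_pos_of_pos_left _ ha
  have hga : g ∣ a := Nat.gcd_dvd_left _ _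
  have hgg0 : g ∣ g0 := Nat.gcd_dvd_right _ _
  have hgr : ∀ i, 1 ≤ i → i ≤ n → g ∣ r i := fun i h1 h2 =>
    hgg0.trans (Finset.gcd_dvd (Finset.mem_Icc.mpr ⟨h1, h2⟩))
  have hSpos : 0 < ∑ i ∈ Finset.Icc 1 n, r i := by
    refine Finset.sum_pos' (fun i _ => Nat.zero_le _) ?_
    exact ⟨1, Finset.mem_Icc.mpr ⟨le_rfl, by omega⟩, hr 1 le_rfl (by omega)⟩
  have hsumdiv : (∑ i ∈ Finset.Icc 1 n, r i) / g = ∑ i ∈ Finset.Icc 1 n, r i / g := by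
    refine Nat.div_eq_of_eq_mul_left hgpos ?_
    rw [Finset.sum_mul]
    exact (Finset.sum_congr rfl fun i hi =>
      (Nat.div_mul_cancel (hgr i (Finset.mem_Icc.mp hi).1 (Finset.mem_Icc.mp hi).2))).symm
  refine ⟨?_, ?_, ?_, ?_, ?_⟩
  · intro i hi
    by_cases h0 : i = 0
    · simp only [h0, if_pos rfl]
      exact Nat.div_pos (Nat.le_of_dvd hSpos hdvd) ha
    · simp only [if_neg h0]; exact hd i (by omega) hi
  · intro i hi
    by_cases h0 : i = 0
    · simp only [h0, if_pos rfl]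
      exact Nat.div_pos (Nat.le_of_dvd ha hga) hgpos
    · simp only [if_neg h0]
      exact Nat.div_pos (Nat.le_of_dvd (hr i (by omega) hi) (hgr i (by omega) hi)) hgpos
  · have hrange : Finset.range (n + 1) = insert 0 (Finset.Icc 1 n) := by
      ext x; simp [Finset.mem_range, Finset.mem_Icc]; omega
    rw [hrange, Finset.gcd_insert]
    have hcongr : ((Finset.Icc 1 n).gcd fun i => if i = 0 then a / g else r i / g)
        = (Finset.Icc 1 n).gcd fun i => r i / g := by
      refine Finset.gcd_congr rfl fun i hi => ?_
      have := (Finset.mem_Icc.mp hi).1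
      simp only [if_neg (by omega : i ≠ 0)]
    have hmul : g0 = g * ((Finset.Icc 1 n).gcd fun i => r i / g) := by
      have : ((Finset.Icc 1 n).gcd fun i => g * (r i / g)) = g0 := by
        refine Finset.gcd_congr rfl fun i hi => ?_
        exact Nat.mul_div_cancel' (hgr i (Finset.mem_Icc.mp hi).1 (Finset.mem_Icc.mp hi).2)
      rw [← this, Finset.gcd_mul_left]
      simp
    have hdivg : ((Finset.Icc 1 n).gcd fun i => r i / g) = g0 / g := by
      rw [hmul, Nat.mul_div_cancel_left _ hgpos]
    simp only [reduceIte] at *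
    show Nat.gcd (a / g) _ = 1
    rw [hcongr, hdivg]
    exact Nat.coprime_div_gcd_div_gcd hgpos
  · simp only [reduceIte]
    have hsum : (∑ i ∈ Finset.Icc 1 n, if i = 0 then a / g else r i / g)
        = ∑ i ∈ Finset.Icc 1 n, r i / g := by
      refine Finset.sum_congr rfl fun i hi => ?_
      have := (Finset.mem_Icc.mp hi).1
      simp only [if_neg (by omega : i ≠ 0)]
    rw [hsum, ← hsumdiv, Nat.div_mul_div_comm hdvd hga, mul_comm a g,
      Nat.mul_div_mul_right _ _ ha]
  · intro i h1 h2
    have hp1 : 1 ≤ cyclePrev n i := by unfold cyclePrev; split <;> omega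
    have hp2 : cyclePrev n i ≤ n := by unfold cyclePrev; split <;> omega
    have hq1 : 1 ≤ cycleNext n i := by unfold cycleNext; split <;> omega
    have hq2 : cycleNext n i ≤ n := by unfold cycleNext; split <;> omega
    simp only [if_neg (by omega : i ≠ 0), if_neg (by omega : cyclePrev n i ≠ 0),
      if_neg (by omega : cycleNext n i ≠ 0), if_pos rfl]
    obtain ⟨A, hA⟩ := hga
    obtain ⟨I, hI⟩ := hgr i h1 h2
    obtain ⟨P, hP⟩ := hgr _ hp1 hp2
    obtain ⟨Q, hQ⟩ := hgr _ hq1 hq2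
    have h := heq i h1 h2
    rw [hA, hI, hP, hQ] at h ⊢
    rw [Nat.mul_div_cancel_left _ hgpos, Nat.mul_div_cancel_left _ hgpos,
      Nat.mul_div_cancel_left _ hgpos, Nat.mul_div_cancel_left _ hgpos]
    refine Nat.eq_of_mul_eq_mul_left hgpos ?_
    calc g * (d i * I) = d i * (g * I) := by ring
      _ = g * P + g * Q + g * A := h
      _ = g * (A + P + Q) := by ring
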